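/- arXiv:1901.08052 — 3 statements merged into one kernel-verified Lean document; each statement's English description precedes it below -/
import Mathlib

section
/- Let G and H be finite simple graphs, each with at least two vertices. Then θ(G × H) ≤ min{ Σ_{e ∈ E(H)} θ(G × e), Σ_{e ∈ E(G)} θ(H × e) }, where for an edge e, G × e denotes the Kronecker product of G with the one-edge graph K_2 on the two endpoints of e. -/
open SimpleGraph

/-- The Kronecker (tensor/direct/categorical) product of two simple graphs:
`(g, h)` is adjacent to `(g', h')` iff `g g' ∈ E(G)` and `h h' ∈ E(H)`. -/
def SimpleGraph.tensorProd {α β : Type*} (G : SimpleGraph α) (H : SimpleGraph β) :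
    SimpleGraph (α × β) where
  Adj x y := G.Adj x.1 y.1 ∧ H.Adj x.2 y.2
  symm := ⟨fun _ _ h => ⟨h.1.symm, h.2.symm⟩⟩
  loopless := ⟨fun _ h => G.loopless.irrefl _ h.1⟩

/-- A simple graph is planar if it has a plane drawing: an injective placement of the
vertices in `ℝ²` together with, for each edge, a simple arc joining the images of its
endpoints, such that the interior of each arc avoids all vertex images and the interiors
of arcs of distinct edges are pairwise disjoint. -/
def SimpleGraph.IsPlanar {V : Type*} (G : SimpleGraph V) : Prop :=
  ∃ (pos : V → ℝ × ℝ) (arc : G.edgeSet → ℝ → ℝ × ℝ),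
    Function.Injective pos ∧
    (∀ e : G.edgeSet, ContinuousOn (arc e) (Set.Icc 0 1) ∧
      Set.InjOn (arc e) (Set.Icc 0 1) ∧
      ∃ u v : V, (e : Sym2 V) = s(u, v) ∧ arc e 0 = pos u ∧ arc e 1 = pos v) ∧
    (∀ e : G.edgeSet, ∀ x ∈ Set.Ioo (0:ℝ) 1, ∀ w : V, arc e x ≠ pos w) ∧
    (∀ e f : G.edgeSet, e ≠ f →
      ∀ x ∈ Set.Ioo (0:ℝ) 1, ∀ y ∈ Set.Ioo (0:ℝ) 1, arc e x ≠ arc f y)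

/-- `G` has a decomposition into `t` planar subgraphs: `t` planar subgraphs of `G`
whose union is `G`. -/
def SimpleGraph.HasPlanarDecomposition {V : Type*} (G : SimpleGraph V) (t : ℕ) : Prop :=
  ∃ f : Fin t → SimpleGraph V, (∀ i, f i ≤ G) ∧ (∀ i, (f i).IsPlanar) ∧ (⨆ i, f i) = G

/-- The thickness of a graph: the minimum number of planar subgraphs whose union is `G`. -/
noncomputable def SimpleGraph.thickness {V : Type*} (G : SimpleGraph V) : ℕ :=
  sInf {t | G.HasPlanarDecomposition t}

lemma myIsPlanar_of_subsingleton {V : Type*} [Fintype V] (G : SimpleGraph V)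
    (hss : G.edgeSet.Subsingleton) : G.IsPlanar := by
  classical
  obtain ⟨f, hf⟩ : ∃ f : V → ℝ, Function.Injective f :=
    ⟨fun v => ((Fintype.equivFin V) v : ℕ),
      fun a b h => (Fintype.equivFin V).injective (Fin.val_injective (Nat.cast_injective h))⟩
  set pos : V → ℝ × ℝ := fun v => (f v, f v ^ 2) with hpos
  have hposinj : Function.Injective pos := fun a b h => hf (congrArg Prod.fst h)
  -- endpoints of an edge
  have hrep : ∀ e : G.edgeSet, (e : Sym2 V) = s((Quot.out (e : Sym2 V)).1, (Quot.out (e : Sym2 V)).2) := by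
    intro e
    conv_lhs => rw [← Quot.out_eq (e : Sym2 V)]
  set u : G.edgeSet → V := fun e => (Quot.out (e : Sym2 V)).1
  set v : G.edgeSet → V := fun e => (Quot.out (e : Sym2 V)).2
  have hne : ∀ e : G.edgeSet, u e ≠ v e := by
    intro e he
    have hd : ¬ (e : Sym2 V).IsDiag := G.not_isDiag_of_mem_edgeSet e.2
    refine hd ?_
    rw [hrep e]
    exact Sym2.mk_isDiag_iff.2 he
  set arc : G.edgeSet → ℝ → ℝ × ℝ := fun e t => pos (u e) + t • (pos (v e) - pos (u e)) with harc
  refine ⟨pos, arc, hposinj, ?_, ?_, ?_⟩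
  · intro e
    refine ⟨(Continuous.continuousOn (by fun_prop)), ?_, u e, v e, hrep e, by simp [harc], by simp [harc]⟩
    intro x _ y _ hxy
    have hd : pos (v e) - pos (u e) ≠ 0 := sub_ne_zero.2 fun h => hne e (hposinj h).symm
    have : x • (pos (v e) - pos (u e)) = y • (pos (v e) - pos (u e)) := by
      have := hxy; simp only [harc] at this; linear_combination this
    exact smul_left_injective ℝ hd this
  · intro e x hx w hxw
    have h1 : arc e x = pos w := hxw
    have ha : (1 - x) * f (u e) + x * f (v e) = f w := by
      have := congrArg Prod.fst h1
      simp [harc, hpos, Prod.ext_iff] at this ⊢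
      linarith [this]
    have hb : (1 - x) * f (u e) ^ 2 + x * f (v e) ^ 2 = f w ^ 2 := by
      have := congrArg Prod.snd h1
      simp [harc, hpos, Prod.ext_iff] at this ⊢
      linarith [this]
    have hab : f (u e) ≠ f (v e) := fun h => hne e (hf h)
    have h5 : f (u e) - f (v e) ≠ 0 := sub_ne_zero.2 hab
    have key : x * (1-x) * (f (u e) - f (v e))^2 = 0 := by
      linear_combination hb - ((1 - x) * f (u e) + x * f (v e) + f w) * ha
    have h6 : 0 < (f (u e) - f (v e))^2 :=
      (sq_nonneg _).lt_of_ne (Ne.symm (pow_ne_zero 2 h5))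
    have h7 := mul_pos (mul_pos hx.1 (by linarith [hx.2] : (0:ℝ) < 1 - x)) h6
    linarith
  · intro e e' hee' _ _ _ _ _
    exact hee' (Subtype.ext (hss e.2 e'.2))

lemma myExistsDecomp {V : Type*} [Fintype V] (G : SimpleGraph V) [DecidableRel G.Adj] :
    G.HasPlanarDecomposition G.edgeFinset.card := by
  classical
  set q : Fin G.edgeFinset.card ≃ G.edgeFinset := G.edgeFinset.equivFin.symm
  refine ⟨fun i => fromEdgeSet {(q i : Sym2 V)}, ?_, ?_, ?_⟩
  · intro i a b hab
    rw [fromEdgeSet_adj] at hab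
    obtain ⟨h1, h2⟩ := hab
    have h3 : (q i : Sym2 V) ∈ G.edgeSet := mem_edgeFinset.1 (q i).2
    rw [Set.mem_singleton_iff] at h1
    rw [← h1] at h3
    exact h3
  · intro i
    refine myIsPlanar_of_subsingleton _ ?_
    intro a ha b hb
    rw [edgeSet_fromEdgeSet] at ha hb
    rw [Set.mem_singleton_iff.1 ha.1, Set.mem_singleton_iff.1 hb.1]
  · ext a b
    rw [iSup_adj]
    constructor
    · rintro ⟨i, hi⟩
      rw [fromEdgeSet_adj] at hi
      obtain ⟨h1, h2⟩ := hi
      have h3 : (q i : Sym2 V) ∈ G.edgeSet := mem_edgeFinset.1 (q i).2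
      rw [Set.mem_singleton_iff] at h1
      rw [← h1] at h3
      exact h3
    · intro hab
      have hm : s(a, b) ∈ G.edgeFinset := mem_edgeFinset.2 hab
      refine ⟨q.symm ⟨_, hm⟩, ?_⟩
      rw [fromEdgeSet_adj]
      exact ⟨by simp, hab.ne⟩

lemma myThicknessLe {V : Type*} {G : SimpleGraph V} {t : ℕ}
    (h : G.HasPlanarDecomposition t) : G.thickness ≤ t := Nat.sInf_le h

lemma myThicknessSpec {V : Type*} [Fintype V] (G : SimpleGraph V) :
    G.HasPlanarDecomposition G.thickness := by
  classical
  exact Nat.sInf_mem (s := {t | G.HasPlanarDecomposition t}) ⟨_, myExistsDecomp G⟩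

lemma myDecompSup {V : Type*} {G H : SimpleGraph V} {s t : ℕ}
    (hG : G.HasPlanarDecomposition s) (hH : H.HasPlanarDecomposition t) :
    (G ⊔ H).HasPlanarDecomposition (s + t) := by
  obtain ⟨f, hf1, hf2, hf3⟩ := hG
  obtain ⟨g, hg1, hg2, hg3⟩ := hH
  refine ⟨(Sum.elim f g) ∘ finSumFinEquiv.symm, ?_, ?_, ?_⟩
  · intro i
    rcases hsj : finSumFinEquiv.symm i with j | j
    · rw [Function.comp_apply, hsj]; exact le_sup_of_le_left (hf1 j)
    · rw [Function.comp_apply, hsj]; exact le_sup_of_le_right (hg1 j)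
  · intro i
    rcases hsj : finSumFinEquiv.symm i with j | j
    · rw [Function.comp_apply, hsj]; exact hf2 j
    · rw [Function.comp_apply, hsj]; exact hg2 j
  · rw [← hf3, ← hg3]
    have h1 : (⨆ i, (Sum.elim f g ∘ finSumFinEquiv.symm) i) = ⨆ x, Sum.elim f g x :=
      Equiv.iSup_comp (g := Sum.elim f g) finSumFinEquiv.symm
    rw [h1, iSup_sum]; rfl

lemma myThicknessSupLe {V : Type*} [Fintype V] (G H : SimpleGraph V) :
    (G ⊔ H).thickness ≤ G.thickness + H.thickness :=
  myThicknessLe (myDecompSup (myThicknessSpec G) (myThicknessSpec H))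

lemma myThicknessBotLe {V : Type*} : (⊥ : SimpleGraph V).thickness ≤ 0 :=
  myThicknessLe ⟨Fin.elim0, fun i => i.elim0, fun i => i.elim0, by simp⟩

lemma myThicknessFinsetSup {V ι : Type*} [Fintype V] (S : Finset ι)
    (F : ι → SimpleGraph V) :
    (S.sup F).thickness ≤ ∑ e ∈ S, (F e).thickness := by
  classical
  induction S using Finset.induction_on with
  | empty => simpa using myThicknessBotLe
  | insert _ _ h ih =>
    rename_i a s
    rw [Finset.sup_insert, Finset.sum_insert h]
    exact le_trans (myThicknessSupLe _ _) (by gcongr)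

lemma myIsPlanar_of_iso {V W : Type*} {G : SimpleGraph V} {G' : SimpleGraph W}
    (φ : G ≃g G') (h : G'.IsPlanar) : G.IsPlanar := by
  obtain ⟨pos, arc, hinj, h1, h2, h3⟩ := h
  refine ⟨pos ∘ φ, fun e => arc (φ.mapEdgeSet e), hinj.comp φ.injective, ?_, ?_, ?_⟩
  · intro e
    obtain ⟨hc, hi, u', v', he, h0, h1'⟩ := h1 (φ.mapEdgeSet e)
    refine ⟨hc, hi, φ.symm u', φ.symm v', ?_, ?_, ?_⟩
    · have hm : (φ.mapEdgeSet e : Sym2 W) = Sym2.map φ (e : Sym2 V) := rfl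
      rw [hm] at he
      have := congrArg (Sym2.map φ.symm) he
      rw [Sym2.map_map] at this
      have h4 : Sym2.map (φ.symm ∘ φ) (e : Sym2 V) = (e : Sym2 V) := by
        rw [show ((φ.symm : W → V) ∘ (φ : V → W)) = id from funext fun x => φ.symm_apply_apply x,
          Sym2.map_id, id_eq]
      rw [h4] at this
      rw [this]
      rfl
    · show arc (φ.mapEdgeSet e) 0 = pos (φ (φ.symm u'))
      rw [h0, φ.apply_symm_apply]
    · show arc (φ.mapEdgeSet e) 1 = pos (φ (φ.symm v'))
      rw [h1', φ.apply_symm_apply]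
  · intro e x hx w hw
    exact h2 (φ.mapEdgeSet e) x hx (φ w) hw
  · intro e f hef x hx y hy
    exact h3 _ _ (fun h => hef (φ.mapEdgeSet.injective h)) x hx y hy

lemma myDecomp_of_iso {V W : Type*} {G : SimpleGraph V} {G' : SimpleGraph W}
    (φ : G ≃g G') {t : ℕ} (h : G'.HasPlanarDecomposition t) :
    G.HasPlanarDecomposition t := by
  obtain ⟨f, h1, h2, h3⟩ := h
  have hcomap : G'.comap φ = G := by ext a b; exact φ.map_rel_iff
  refine ⟨fun i => (f i).comap φ, ?_, ?_, ?_⟩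
  · intro i a b hab
    exact φ.map_rel_iff.mp (h1 i hab)
  · intro i
    exact myIsPlanar_of_iso ⟨φ.toEquiv, Iff.rfl⟩ (h2 i)
  · ext a b
    simp only [iSup_adj, comap_adj]
    rw [← φ.map_rel_iff, ← iSup_adj, h3]

lemma myThickness_eq_of_iso {V W : Type*} {G : SimpleGraph V} {G' : SimpleGraph W}
    (φ : G ≃g G') : G.thickness = G'.thickness := by
  unfold SimpleGraph.thickness
  congr 1
  ext t
  exact ⟨fun h => myDecomp_of_iso φ.symm h, fun h => myDecomp_of_iso φ h⟩

def mySwapIso {α β : Type*} (G : SimpleGraph α) (H : SimpleGraph β) :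
    (G.tensorProd H) ≃g (H.tensorProd G) :=
  ⟨Equiv.prodComm α β, fun {x y} => and_comm⟩

lemma myTensorSupRight {α β : Type*} [Fintype β] (G : SimpleGraph α) (H : SimpleGraph β)
    [DecidableRel H.Adj] :
    G.tensorProd H = H.edgeFinset.sup (fun e => G.tensorProd (fromEdgeSet {e})) := by
  apply le_antisymm
  · intro x y hxy
    obtain ⟨h1, h2⟩ := hxy
    have hm : s(x.2, y.2) ∈ H.edgeFinset := mem_edgeFinset.2 h2
    have hle : G.tensorProd (fromEdgeSet {s(x.2, y.2)}) ≤
        H.edgeFinset.sup (fun e => G.tensorProd (fromEdgeSet {e})) :=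
      Finset.le_sup (f := fun e => G.tensorProd (fromEdgeSet {e})) hm
    exact hle ⟨h1, by rw [fromEdgeSet_adj]; exact ⟨rfl, h2.ne⟩⟩
  · refine Finset.sup_le fun e he => ?_
    intro x y hxy
    obtain ⟨h1, h2⟩ := hxy
    rw [fromEdgeSet_adj] at h2
    refine ⟨h1, ?_⟩
    have h3 : e ∈ H.edgeSet := mem_edgeFinset.1 he
    rw [← Set.mem_singleton_iff.1 h2.1] at h3
    exact h3

lemma myTensorSupLeft {α β : Type*} [Fintype α] (G : SimpleGraph α) (H : SimpleGraph β)
    [DecidableRel G.Adj] :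
    G.tensorProd H = G.edgeFinset.sup (fun e => (fromEdgeSet {e}).tensorProd H) := by
  apply le_antisymm
  · intro x y hxy
    obtain ⟨h1, h2⟩ := hxy
    have hm : s(x.1, y.1) ∈ G.edgeFinset := mem_edgeFinset.2 h1
    have hle : (fromEdgeSet {s(x.1, y.1)}).tensorProd H ≤
        G.edgeFinset.sup (fun e => (fromEdgeSet {e}).tensorProd H) :=
      Finset.le_sup (f := fun e => (fromEdgeSet {e}).tensorProd H) hm
    exact hle ⟨by rw [fromEdgeSet_adj]; exact ⟨rfl, h1.ne⟩, h2⟩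
  · refine Finset.sup_le fun e he => ?_
    intro x y hxy
    obtain ⟨h1, h2⟩ := hxy
    rw [fromEdgeSet_adj] at h1
    refine ⟨?_, h2⟩
    have h3 : e ∈ G.edgeSet := mem_edgeFinset.1 he
    rw [← Set.mem_singleton_iff.1 h1.1] at h3
    exact h3

/-- For finite simple graphs `G`, `H` with at least two vertices each,
`θ(G × H) ≤ min{ Σ_{e ∈ E(H)} θ(G × e), Σ_{e ∈ E(G)} θ(H × e) }`, where for an edge `e`,
`G × e` is the Kronecker product of `G` with the one-edge graph on the endpoints of `e`. -/
theorem thickness_tensorProd_upper_bound {α β : Type*} [Fintype α] [Fintype β]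
    (G : SimpleGraph α) (H : SimpleGraph β)
    [DecidableRel G.Adj] [DecidableRel H.Adj]
    (hα : 2 ≤ Fintype.card α) (hβ : 2 ≤ Fintype.card β) :
    (G.tensorProd H).thickness ≤
      min (∑ e ∈ H.edgeFinset, (G.tensorProd (SimpleGraph.fromEdgeSet {e})).thickness)
          (∑ e ∈ G.edgeFinset, (H.tensorProd (SimpleGraph.fromEdgeSet {e})).thickness) := by
  refine le_min ?_ ?_
  · have h := myThicknessFinsetSup H.edgeFinset (fun e => G.tensorProd (fromEdgeSet {e}))
    rw [← myTensorSupRight G H] at h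
    exact h
  · have h := myThicknessFinsetSup G.edgeFinset (fun e => (fromEdgeSet {e}).tensorProd H)
    rw [← myTensorSupLeft G H] at h
    refine le_trans h (Finset.sum_le_sum fun e he => ?_)
    exact (myThickness_eq_of_iso (mySwapIso (fromEdgeSet {e}) H)).le
end

section
/- For all positive integers m, n, p, q, the thickness of the Kronecker product of complete bipartite graphs satisfies θ(K_{m,n} × K_{p,q}) = max{ θ(K_{mp,nq}), θ(K_{mq,np}) }. -/
open SimpleGraph

noncomputable def squash (z : ℝ × ℝ) : ℝ × ℝ := (1 + ‖z‖)⁻¹ • z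

lemma squash_norm_lt (z : ℝ × ℝ) : ‖squash z‖ < 1 := by
  have h0 : (0:ℝ) < 1 + ‖z‖ := by positivity
  rw [squash, norm_smul, Real.norm_eq_abs, abs_of_pos (by positivity)]
  rw [inv_mul_lt_one₀ h0]
  linarith

lemma squash_injective : Function.Injective squash := by
  intro a b h
  have h0a : (0:ℝ) < 1 + ‖a‖ := by positivity
  have h0b : (0:ℝ) < 1 + ‖b‖ := by positivity
  have hn : (1 + ‖a‖)⁻¹ * ‖a‖ = (1 + ‖b‖)⁻¹ * ‖b‖ := by
    have := congrArg norm h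
    rwa [squash, squash, norm_smul, norm_smul, Real.norm_eq_abs, Real.norm_eq_abs,
      abs_of_pos (inv_pos.2 h0a), abs_of_pos (inv_pos.2 h0b)] at this
  have hab : ‖a‖ = ‖b‖ := by
    field_simp at hn
    nlinarith
  have : (1 + ‖a‖) • ((1 + ‖a‖)⁻¹ • a) = (1 + ‖a‖) • ((1 + ‖a‖)⁻¹ • b) := by
    rw [squash] at h; rw [h, squash, hab]
  simpa [smul_smul, mul_inv_cancel₀ h0a.ne'] using this

lemma squash_continuous : Continuous squash := by
  refine Continuous.smul (f := fun z : ℝ × ℝ => (1 + ‖z‖)⁻¹) (g := id) ?_ ?_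
  · exact (continuous_const.add continuous_norm).inv₀ (fun z => (add_pos_of_pos_of_nonneg one_pos (norm_nonneg z)).ne')
  · exact continuous_id

lemma abs_fst_le_norm (p : ℝ × ℝ) : |p.1| ≤ ‖p‖ := by
  rw [Prod.norm_def]; exact le_max_of_le_left (le_of_eq (Real.norm_eq_abs _).symm)

lemma squash_ne_shift (z w : ℝ × ℝ) : squash z ≠ (3, 0) + squash w := by
  intro h
  have h1 : (squash z).1 < 1 := lt_of_le_of_lt (le_abs_self _)
    (lt_of_le_of_lt (abs_fst_le_norm _) (squash_norm_lt z))
  have h2 : -1 < (squash w).1 := by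
    have := lt_of_le_of_lt (abs_fst_le_norm _) (squash_norm_lt w)
    rw [abs_lt] at this; exact this.1
  have : (squash z).1 = 3 + (squash w).1 := by rw [h]; rfl
  linarith

variable {α β : Type*} {G : SimpleGraph α} {H : SimpleGraph β}

lemma sum_edge_cases (e : (G ⊕g H).edgeSet) :
    (∃ e' : G.edgeSet, (e : Sym2 (α ⊕ β)) = Sym2.map Sum.inl (e' : Sym2 α)) ∨
    (∃ e' : H.edgeSet, (e : Sym2 (α ⊕ β)) = Sym2.map Sum.inr (e' : Sym2 β)) := by
  obtain ⟨e, he⟩ := e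
  induction e using Sym2.ind with
  | _ x y =>
    rw [SimpleGraph.mem_edgeSet] at he
    cases x with
    | inl a => cases y with
      | inl b => exact Or.inl ⟨⟨s(a,b), G.mem_edgeSet.mpr he⟩, (Sym2.map_pair_eq _ _ _).symm⟩
      | inr b => exact absurd he (by simp)
    | inr a => cases y with
      | inl b => exact absurd he (by simp)
      | inr b => exact Or.inr ⟨⟨s(a,b), H.mem_edgeSet.mpr he⟩, (Sym2.map_pair_eq _ _ _).symm⟩

/-- Planarity pulls back along injective graph homomorphisms. -/
lemma isPlanar_of_hom {V W : Type*} {G : SimpleGraph V} {F : SimpleGraph W}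
    (φ : V → W) (hφ : Function.Injective φ) (hadj : ∀ a b, G.Adj a b → F.Adj (φ a) (φ b))
    (hF : F.IsPlanar) : G.IsPlanar := by
  obtain ⟨pos, arc, hpos, hend, hint, hdisj⟩ := hF
  have hmem : ∀ e : G.edgeSet, Sym2.map φ (e : Sym2 V) ∈ F.edgeSet := by
    rintro ⟨e, he⟩
    induction e using Sym2.ind with
    | _ u v => exact hadj u v he
  refine ⟨pos ∘ φ, fun e => arc ⟨Sym2.map φ e, hmem e⟩, hpos.comp hφ, ?_, ?_, ?_⟩
  · intro e
    obtain ⟨hc, hi, _, _, _⟩ := hend ⟨Sym2.map φ e, hmem e⟩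
    refine ⟨hc, hi, ?_⟩
    obtain ⟨e, he⟩ := e
    induction e using Sym2.ind with
    | _ u v =>
      obtain ⟨hc', hi', u', v', hs, h0, h1⟩ := hend ⟨Sym2.map φ s(u, v), hmem ⟨_, he⟩⟩
      simp only [Sym2.map_pair_eq] at hs
      rw [Sym2.eq_iff] at hs
      rcases hs with ⟨h1', h2'⟩ | ⟨h1', h2'⟩
      · subst h1' h2'; exact ⟨u, v, rfl, h0, h1⟩
      · subst h1' h2'; exact ⟨v, u, Sym2.eq_swap, h0, h1⟩
  · intro e x hx w
    exact hint _ x hx (φ w)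
  · intro e f hef x hx y hy
    apply hdisj _ _ _ x hx y hy
    simp only [ne_eq, Subtype.mk.injEq]
    intro h
    exact hef (Subtype.ext (Sym2.map.injective hφ h))

lemma isPlanar_sum (hG : G.IsPlanar) (hH : H.IsPlanar) : (G ⊕g H).IsPlanar := by
  classical
  obtain ⟨pos₁, arc₁, hpos₁, hend₁, hint₁, hdisj₁⟩ := hG
  obtain ⟨pos₂, arc₂, hpos₂, hend₂, hint₂, hdisj₂⟩ := hH
  set T : ℝ × ℝ := (3, 0) with hT
  refine ⟨Sum.elim (fun a => squash (pos₁ a)) (fun b => T + squash (pos₂ b)),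
    fun e => if h : ∃ e' : G.edgeSet, (e : Sym2 (α ⊕ β)) = Sym2.map Sum.inl (e' : Sym2 α)
      then fun x => squash (arc₁ h.choose x)
      else fun x => T + squash (arc₂ ((sum_edge_cases e).resolve_left h).choose x),
    ?_, ?_, ?_, ?_⟩
  · rintro (a | a) (b | b) h <;> simp only [Sum.elim_inl, Sum.elim_inr] at h
    · rw [hpos₁ (squash_injective h)]
    · exact absurd h (squash_ne_shift _ _)
    · exact absurd h.symm (squash_ne_shift _ _)
    · rw [hpos₂ (squash_injective (add_left_cancel h))]
  · intro e
    by_cases h : ∃ e' : G.edgeSet, (e : Sym2 (α ⊕ β)) = Sym2.map Sum.inl (e' : Sym2 α)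
    · simp only [dif_pos h]
      obtain ⟨hc, hi, u, v, hs, h0, h1⟩ := hend₁ h.choose
      refine ⟨squash_continuous.comp_continuousOn hc,
        fun x hx y hy hxy => hi hx hy (squash_injective hxy), Sum.inl u, Sum.inl v, ?_, ?_, ?_⟩
      · rw [h.choose_spec, hs, Sym2.map_pair_eq]
      · simp [h0]
      · simp [h1]
    · simp only [dif_neg h]
      obtain ⟨hc, hi, u, v, hs, h0, h1⟩ := hend₂ ((sum_edge_cases e).resolve_left h).choose
      refine ⟨(continuous_const.add (squash_continuous.comp continuous_id)).comp_continuousOn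
          (by exact hc.congr (fun x _ => rfl) |>.mono le_rfl) |>.congr (fun x _ => rfl), ?_,
        Sum.inr u, Sum.inr v, ?_, ?_, ?_⟩
      · intro x hx y hy hxy
        exact hi hx hy (squash_injective (add_left_cancel hxy))
      · rw [((sum_edge_cases e).resolve_left h).choose_spec, hs, Sym2.map_pair_eq]
      · simp [h0]
      · simp [h1]
  · intro e x hx w
    by_cases h : ∃ e' : G.edgeSet, (e : Sym2 (α ⊕ β)) = Sym2.map Sum.inl (e' : Sym2 α)
    · simp only [dif_pos h]
      cases w with
      | inl w => exact fun hc => hint₁ h.choose x hx w (squash_injective hc)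
      | inr w => exact fun hc => squash_ne_shift _ _ hc
    · simp only [dif_neg h]
      cases w with
      | inl w => exact fun hc => squash_ne_shift _ _ hc.symm
      | inr w =>
          exact fun hc => hint₂ ((sum_edge_cases e).resolve_left h).choose x hx w
            (squash_injective (add_left_cancel hc))
  · intro e f hef x hx y hy
    by_cases h : ∃ e' : G.edgeSet, (e : Sym2 (α ⊕ β)) = Sym2.map Sum.inl (e' : Sym2 α) <;>
      by_cases h' : ∃ e' : G.edgeSet, (f : Sym2 (α ⊕ β)) = Sym2.map Sum.inl (e' : Sym2 α)
    · simp only [dif_pos h, dif_pos h']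
      have hne : h.choose ≠ h'.choose := by
        intro hc
        apply hef
        apply Subtype.ext
        rw [h.choose_spec, h'.choose_spec, hc]
      exact fun hc => hdisj₁ _ _ hne x hx y hy (squash_injective hc)
    · simp only [dif_pos h, dif_neg h']
      exact fun hc => squash_ne_shift _ _ hc
    · simp only [dif_neg h, dif_pos h']
      exact fun hc => squash_ne_shift _ _ hc.symm
    · simp only [dif_neg h, dif_neg h']
      have hne : ((sum_edge_cases e).resolve_left h).choose ≠
          ((sum_edge_cases f).resolve_left h').choose := by
        intro hc
        apply hef
        apply Subtype.ext
        rw [((sum_edge_cases e).resolve_left h).choose_spec,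
          ((sum_edge_cases f).resolve_left h').choose_spec, hc]
      exact fun hc => hdisj₂ _ _ hne x hx y hy (squash_injective (add_left_cancel hc))

section Single

variable {V : Type*} [Fintype V]

noncomputable def vpos (v : V) : ℝ × ℝ :=
  (((Fintype.equivFin V v : ℕ) : ℝ), ((Fintype.equivFin V v : ℕ) : ℝ) ^ 2)

lemma vpos_injective : Function.Injective (vpos (V := V)) := by
  intro a b h
  have h1 : ((Fintype.equivFin V a : ℕ) : ℝ) = ((Fintype.equivFin V b : ℕ) : ℝ) :=
    congrArg Prod.fst h
  exact (Fintype.equivFin V).injective (Fin.val_injective (Nat.cast_injective h1))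

lemma vpos_snd (v : V) : (vpos v).2 = (vpos v).1 ^ 2 := rfl

lemma isPlanar_bot : (⊥ : SimpleGraph V).IsPlanar := by
  have he : ∀ e : (⊥ : SimpleGraph V).edgeSet, False := by
    rintro ⟨e, he⟩; simpa using he
  exact ⟨vpos, fun e => (he e).elim, vpos_injective,
    fun e => (he e).elim, fun e => (he e).elim, fun e => (he e).elim⟩

lemma isPlanar_singleEdge {u v : V} (huv : u ≠ v) :
    (SimpleGraph.fromEdgeSet {s(u, v)}).IsPlanar := by
  have hedge : ∀ e : (SimpleGraph.fromEdgeSet {s(u, v)}).edgeSet, (e : Sym2 V) = s(u, v) := by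
    rintro ⟨e, he⟩
    rw [SimpleGraph.edgeSet_fromEdgeSet] at he
    exact he.1
  have hne : vpos v - vpos u ≠ 0 := sub_ne_zero.mpr (fun h => huv (vpos_injective h).symm)
  refine ⟨vpos, fun _ x => vpos u + x • (vpos v - vpos u), vpos_injective, ?_, ?_, ?_⟩
  · intro e
    refine ⟨(continuous_const.add (continuous_id.smul continuous_const)).continuousOn, ?_,
      u, v, hedge e, by simp, by simp⟩
    intro x _ y _ hxy
    have : (x - y) • (vpos v - vpos u) = 0 := by
      rw [sub_smul, add_left_cancel hxy, sub_self]
    rcases smul_eq_zero.mp this with h | h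
    · linarith [sub_eq_zero.mp h]
    · exact absurd h hne
  · intro e x hx w hcon
    set s := ((Fintype.equivFin V u : ℕ) : ℝ)
    set t := ((Fintype.equivFin V v : ℕ) : ℝ)
    have hst : s ≠ t := fun h => huv ((Fintype.equivFin V).injective
      (Fin.val_injective (Nat.cast_injective h)))
    have hc1 : s + x * (t - s) = (vpos w).1 := by
      have := congrArg Prod.fst hcon
      simpa [vpos, Prod.smul_def, Prod.fst_add] using this
    have hc2 : s ^ 2 + x * (t ^ 2 - s ^ 2) = (vpos w).2 := by
      have := congrArg Prod.snd hcon
      simpa [vpos, Prod.smul_def, Prod.snd_add] using this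
    have hw : (vpos w).2 = (vpos w).1 ^ 2 := vpos_snd w
    rw [← hc1] at hw
    rw [hw] at hc2
    have hkey : x * (1 - x) * (t - s) ^ 2 = 0 := by nlinarith [hc2]
    obtain ⟨hx0, hx1⟩ := hx
    have hts : t - s ≠ 0 := sub_ne_zero.mpr hst.symm
    have hpos2 : (t - s) ^ 2 > 0 := by positivity
    nlinarith [mul_pos (mul_pos hx0 (by linarith : (0:ℝ) < 1 - x)) hpos2]
  · intro e f hef
    exact absurd (Subtype.ext ((hedge e).trans (hedge f).symm)) hef

end Single

section Decomp

variable {V : Type*} [Fintype V] {G : SimpleGraph V}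

lemma edge_repr (e : G.edgeSet) : ∃ u v : V, (e : Sym2 V) = s(u, v) ∧ u ≠ v := by
  obtain ⟨e, he⟩ := e
  induction e using Sym2.ind with
  | _ u v => exact ⟨u, v, rfl, G.ne_of_adj he⟩

lemma exists_hasPlanarDecomposition (G : SimpleGraph V) : ∃ t, G.HasPlanarDecomposition t := by
  classical
  obtain ⟨t, ⟨φ⟩⟩ := Finite.exists_equiv_fin G.edgeSet
  refine ⟨t, fun i => SimpleGraph.fromEdgeSet {(φ.symm i : Sym2 V)}, ?_, ?_, ?_⟩
  · intro i
    calc SimpleGraph.fromEdgeSet {(φ.symm i : Sym2 V)}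
        ≤ SimpleGraph.fromEdgeSet G.edgeSet :=
          SimpleGraph.fromEdgeSet_mono (Set.singleton_subset_iff.mpr (φ.symm i).2)
      _ = G := SimpleGraph.fromEdgeSet_edgeSet G
  · intro i
    obtain ⟨u, v, hs, huv⟩ := edge_repr (φ.symm i)
    dsimp only
    rw [hs]
    exact isPlanar_singleEdge huv
  · ext a b
    rw [SimpleGraph.iSup_adj]
    constructor
    · rintro ⟨i, hi⟩
      simp only [SimpleGraph.fromEdgeSet_adj] at hi
      have := hi.1
      rw [Set.mem_singleton_iff] at this
      have hmem : s(a, b) ∈ G.edgeSet := this ▸ (φ.symm i).2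
      exact G.mem_edgeSet.mp hmem
    · intro hab
      refine ⟨φ ⟨s(a, b), G.mem_edgeSet.mpr hab⟩, ?_⟩
      simp only [SimpleGraph.fromEdgeSet_adj]
      exact ⟨by simp, G.ne_of_adj hab⟩

lemma SimpleGraph.HasPlanarDecomposition.mono {t t' : ℕ} (h : G.HasPlanarDecomposition t)
    (htt' : t ≤ t') : G.HasPlanarDecomposition t' := by
  obtain ⟨f, h1, h2, h3⟩ := h
  refine ⟨fun i => if hi : (i : ℕ) < t then f ⟨i, hi⟩ else ⊥, ?_, ?_, ?_⟩
  · intro i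
    by_cases hi : (i : ℕ) < t
    · simp only [dif_pos hi]; exact h1 _
    · simp only [dif_neg hi]; exact bot_le
  · intro i
    by_cases hi : (i : ℕ) < t
    · simp only [dif_pos hi]; exact h2 _
    · simp only [dif_neg hi]; exact isPlanar_bot
  · apply le_antisymm
    · apply iSup_le
      intro i
      by_cases hi : (i : ℕ) < t
      · simp only [dif_pos hi]; exact h1 _
      · simp only [dif_neg hi]; exact bot_le
    · conv_lhs => rw [← h3]
      apply iSup_le
      intro i
      have hi : ((Fin.castLE htt' i : Fin t') : ℕ) < t := by simp [i.2]
      apply le_iSup_of_le (Fin.castLE htt' i)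
      simp only [dif_pos hi]
      exact le_of_eq (congrArg f (Fin.ext rfl))

end Decomp

lemma adj_of_graph_eq {V : Type*} {G K : SimpleGraph V} (h : G = K) {a b : V}
    (ha : G.Adj a b) : K.Adj a b := h ▸ ha

lemma hasPlanarDecomposition_of_iso {V W : Type*} {G : SimpleGraph V} {H : SimpleGraph W}
    (φ : G ≃g H) {t : ℕ} (h : G.HasPlanarDecomposition t) : H.HasPlanarDecomposition t := by
  obtain ⟨f, h1, h2, h3⟩ := h
  refine ⟨fun i => ⟨fun x y => (f i).Adj (φ.symm x) (φ.symm y),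
    ⟨fun x y hxy => (f i).adj_symm hxy⟩, ⟨fun x hx => (f i).loopless.irrefl _ hx⟩⟩, ?_, ?_, ?_⟩
  · intro i x y hxy
    exact φ.symm.map_rel_iff.mp (h1 i hxy)
  · intro i
    exact isPlanar_of_hom (fun x => φ.symm x) φ.symm.injective (fun a b hab => hab) (h2 i)
  · ext x y
    rw [SimpleGraph.iSup_adj]
    constructor
    · rintro ⟨i, hi⟩
      exact φ.symm.map_rel_iff.mp
        (adj_of_graph_eq h3 (SimpleGraph.iSup_adj.mpr ⟨i, hi⟩))
    · intro hxy
      obtain ⟨i, hi⟩ := SimpleGraph.iSup_adj.mp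
        (adj_of_graph_eq h3.symm (φ.symm.map_rel_iff.mpr hxy))
      exact ⟨i, hi⟩

lemma thickness_iso {V W : Type*} {G : SimpleGraph V} {H : SimpleGraph W} (φ : G ≃g H) :
    G.thickness = H.thickness := by
  unfold SimpleGraph.thickness
  congr 1
  ext t
  exact ⟨hasPlanarDecomposition_of_iso φ, hasPlanarDecomposition_of_iso φ.symm⟩

section Sum

variable {α β : Type*} [Fintype α] [Fintype β] {G : SimpleGraph α} {H : SimpleGraph β}

lemma decomp_sum_left {t : ℕ} (h : (G ⊕g H).HasPlanarDecomposition t) :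
    G.HasPlanarDecomposition t := by
  obtain ⟨f, h1, h2, h3⟩ := h
  refine ⟨fun i => ⟨fun a b => (f i).Adj (Sum.inl a) (Sum.inl b),
    ⟨fun a b hab => (f i).adj_symm hab⟩, ⟨fun a ha => (f i).loopless.irrefl _ ha⟩⟩, ?_, ?_, ?_⟩
  · intro i a b hab
    have := h1 i hab
    simpa using this
  · intro i
    exact isPlanar_of_hom Sum.inl Sum.inl_injective (fun a b hab => hab) (h2 i)
  · ext a b
    rw [SimpleGraph.iSup_adj]
    constructor
    · rintro ⟨i, hi⟩
      have := adj_of_graph_eq h3 (SimpleGraph.iSup_adj.mpr ⟨i, hi⟩)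
      simpa using this
    · intro hab
      have : (G ⊕g H).Adj (Sum.inl a) (Sum.inl b) := by simpa using hab
      obtain ⟨i, hi⟩ := SimpleGraph.iSup_adj.mp (adj_of_graph_eq h3.symm this)
      exact ⟨i, hi⟩

lemma decomp_sum_right {t : ℕ} (h : (G ⊕g H).HasPlanarDecomposition t) :
    H.HasPlanarDecomposition t := by
  obtain ⟨f, h1, h2, h3⟩ := h
  refine ⟨fun i => ⟨fun a b => (f i).Adj (Sum.inr a) (Sum.inr b),
    ⟨fun a b hab => (f i).adj_symm hab⟩, ⟨fun a ha => (f i).loopless.irrefl _ ha⟩⟩, ?_, ?_, ?_⟩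
  · intro i a b hab
    have := h1 i hab
    simpa using this
  · intro i
    exact isPlanar_of_hom Sum.inr Sum.inr_injective (fun a b hab => hab) (h2 i)
  · ext a b
    rw [SimpleGraph.iSup_adj]
    constructor
    · rintro ⟨i, hi⟩
      have := adj_of_graph_eq h3 (SimpleGraph.iSup_adj.mpr ⟨i, hi⟩)
      simpa using this
    · intro hab
      have : (G ⊕g H).Adj (Sum.inr a) (Sum.inr b) := by simpa using hab
      obtain ⟨i, hi⟩ := SimpleGraph.iSup_adj.mp (adj_of_graph_eq h3.symm this)
      exact ⟨i, hi⟩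

lemma decomp_sum_of {t : ℕ} (hG : G.HasPlanarDecomposition t)
    (hH : H.HasPlanarDecomposition t) : (G ⊕g H).HasPlanarDecomposition t := by
  obtain ⟨g, hg1, hg2, hg3⟩ := hG
  obtain ⟨k, hk1, hk2, hk3⟩ := hH
  refine ⟨fun i => g i ⊕g k i, ?_, ?_, ?_⟩
  · rintro i (a | a) (b | b) hab <;> simp only [SimpleGraph.sum_adj] at hab ⊢ <;>
      first
      | exact hg1 i hab
      | exact hk1 i hab
  · intro i
    exact isPlanar_sum (hg2 i) (hk2 i)
  · ext x y
    rw [SimpleGraph.iSup_adj]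
    constructor
    · rintro ⟨i, hi⟩
      cases x <;> cases y <;> simp only [SimpleGraph.sum_adj] at hi ⊢ <;>
        first
        | exact adj_of_graph_eq hg3 (SimpleGraph.iSup_adj.mpr ⟨i, hi⟩)
        | exact adj_of_graph_eq hk3 (SimpleGraph.iSup_adj.mpr ⟨i, hi⟩)
    · intro hxy
      cases x <;> cases y <;> simp only [SimpleGraph.sum_adj] at hxy <;>
        first
        | (obtain ⟨i, hi⟩ := SimpleGraph.iSup_adj.mp (adj_of_graph_eq hg3.symm hxy)
           exact ⟨i, by simpa using hi⟩)
        | (obtain ⟨i, hi⟩ := SimpleGraph.iSup_adj.mp (adj_of_graph_eq hk3.symm hxy)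
           exact ⟨i, by simpa using hi⟩)

lemma thickness_sum : (G ⊕g H).thickness = max G.thickness H.thickness := by
  obtain ⟨tg, hg⟩ := exists_hasPlanarDecomposition G
  obtain ⟨th, hh⟩ := exists_hasPlanarDecomposition H
  have hGmem : G.HasPlanarDecomposition G.thickness :=
    Nat.sInf_mem (⟨tg, hg⟩ : {t | G.HasPlanarDecomposition t}.Nonempty)
  have hHmem : H.HasPlanarDecomposition H.thickness :=
    Nat.sInf_mem (⟨th, hh⟩ : {t | H.HasPlanarDecomposition t}.Nonempty)
  have hSmem : (G ⊕g H).HasPlanarDecomposition (max G.thickness H.thickness) :=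
    decomp_sum_of (hGmem.mono (le_max_left _ _)) (hHmem.mono (le_max_right _ _))
  apply le_antisymm
  · exact Nat.sInf_le hSmem
  · have hs : (G ⊕g H).HasPlanarDecomposition (G ⊕g H).thickness :=
      Nat.sInf_mem (⟨_, hSmem⟩ : {t | (G ⊕g H).HasPlanarDecomposition t}.Nonempty)
    exact max_le (Nat.sInf_le (decomp_sum_left hs)) (Nat.sInf_le (decomp_sum_right hs))

end Sum

def bipCongr {α α' β β' : Type*} (ea : α ≃ α') (eb : β ≃ β') :
    completeBipartiteGraph α β ≃g completeBipartiteGraph α' β' :=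
  ⟨Equiv.sumCongr ea eb, by rintro (a | a) (b | b) <;> simp⟩

def sumIsoCongr {α α' β β' : Type*} {G : SimpleGraph α} {G' : SimpleGraph α'}
    {H : SimpleGraph β} {H' : SimpleGraph β'} (eg : G ≃g G') (eh : H ≃g H') :
    G ⊕g H ≃g G' ⊕g H' :=
  ⟨Equiv.sumCongr eg.toEquiv eh.toEquiv, by
    rintro (a | a) (b | b) <;> simp [eg.map_rel_iff, eh.map_rel_iff]⟩

def bigEquiv (m n p q : ℕ) : (Fin m ⊕ Fin n) × (Fin p ⊕ Fin q) ≃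
    ((Fin m × Fin p) ⊕ (Fin n × Fin q)) ⊕ ((Fin m × Fin q) ⊕ (Fin n × Fin p)) where
  toFun x := match x with
    | (Sum.inl a, Sum.inl c) => Sum.inl (Sum.inl (a, c))
    | (Sum.inr b, Sum.inr d) => Sum.inl (Sum.inr (b, d))
    | (Sum.inl a, Sum.inr d) => Sum.inr (Sum.inl (a, d))
    | (Sum.inr b, Sum.inl c) => Sum.inr (Sum.inr (b, c))
  invFun y := match y with
    | Sum.inl (Sum.inl (a, c)) => (Sum.inl a, Sum.inl c)
    | Sum.inl (Sum.inr (b, d)) => (Sum.inr b, Sum.inr d)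
    | Sum.inr (Sum.inl (a, d)) => (Sum.inl a, Sum.inr d)
    | Sum.inr (Sum.inr (b, c)) => (Sum.inr b, Sum.inl c)
  left_inv := by rintro ⟨a | a, c | c⟩ <;> rfl
  right_inv := by rintro ((⟨a, c⟩ | ⟨b, d⟩) | (⟨a, d⟩ | ⟨b, c⟩)) <;> rfl

def bigIso (m n p q : ℕ) :
    (completeBipartiteGraph (Fin m) (Fin n)).tensorProd
        (completeBipartiteGraph (Fin p) (Fin q)) ≃g
      (completeBipartiteGraph (Fin m × Fin p) (Fin n × Fin q) ⊕g
        completeBipartiteGraph (Fin m × Fin q) (Fin n × Fin p)) :=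
  ⟨bigEquiv m n p q, by
    rintro ⟨a | a, c | c⟩ ⟨b | b, d | d⟩ <;>
      simp [bigEquiv, SimpleGraph.tensorProd, SimpleGraph.sum_adj]⟩

/-- `θ(K_{m,n} × K_{p,q}) = max{θ(K_{mp,nq}), θ(K_{mq,np})}` for all positive
integers `m, n, p, q`. -/
theorem thickness_tensorProd_completeBipartite (m n p q : ℕ)
    (hm : 1 ≤ m) (hn : 1 ≤ n) (hp : 1 ≤ p) (hq : 1 ≤ q) :
    ((completeBipartiteGraph (Fin m) (Fin n)).tensorProd
        (completeBipartiteGraph (Fin p) (Fin q))).thickness =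
      max (completeBipartiteGraph (Fin (m * p)) (Fin (n * q))).thickness
          (completeBipartiteGraph (Fin (m * q)) (Fin (n * p))).thickness := by
  rw [thickness_iso (bigIso m n p q), thickness_sum,
    thickness_iso (bipCongr finProdFinEquiv finProdFinEquiv),
    thickness_iso (bipCongr finProdFinEquiv finProdFinEquiv)]
end

section
/- For every integer p ≥ 0 and n = 4p + 3, there exists a planar decomposition of the Kronecker product K_{n,n,n} × K_2 into 2p + 2 planar subgraphs; in particular θ(K_{4p+3,4p+3,4p+3} × K_2) ≤ 2p + 2. -/
open SimpleGraph

/-- The complete tripartite graph `K_{l,m,n}`. -/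
def completeTripartiteGraph (l m n : ℕ) :
    SimpleGraph (Σ i : Fin 3, Fin (![l, m, n] i)) :=
  completeMultipartiteGraph fun i : Fin 3 => Fin (![l, m, n] i)

namespace SectorPlanar

def dir (c : Fin 6) : ℝ × ℝ :=
  match c with
  | ⟨0,_⟩ => (1,0) | ⟨1,_⟩ => (1,1) | ⟨2,_⟩ => (0,1)
  | ⟨3,_⟩ => (-1,0) | ⟨4,_⟩ => (-1,-1) | ⟨5,_⟩ => (0,-1)

lemma rays_distinct (c c' : Fin 6) (hne : c ≠ c') (r r' : ℝ) (hr : 0 < r) (hr' : 0 < r') :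
    r • dir c ≠ r' • dir c' := by
  fin_cases c <;> fin_cases c' <;>
    simp_all [dir, Prod.ext_iff, Prod.smul_mk, smul_eq_mul] <;>
    first
    | linarith
    | (intro h1 h2; linarith)

-- L2: positive ray points are not in any open sector
lemma ray_not_in_sector (c c'' : Fin 6) (α β r : ℝ) (hα : 0 < α) (hβ : 0 < β) (hr : 0 < r) :
    α • dir c + β • dir (c+1) ≠ r • dir c'' := by
  fin_cases c <;> fin_cases c'' <;>
    simp_all [dir, Fin.add_def, Prod.ext_iff, Prod.smul_mk, smul_eq_mul] <;>
    first
    | linarith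
    | (intro h1 h2; linarith)
    | (intro h1; linarith)

-- L3: open sectors are disjoint
lemma sectors_disjoint (c c' : Fin 6) (hne : c ≠ c') (α β α' β' : ℝ)
    (hα : 0 < α) (hβ : 0 < β) (hα' : 0 < α') (hβ' : 0 < β') :
    α • dir c + β • dir (c+1) ≠ α' • dir c' + β' • dir (c'+1) := by
  fin_cases c <;> fin_cases c' <;>
    simp_all [dir, Fin.add_def, Prod.ext_iff, Prod.smul_mk, smul_eq_mul] <;>
    first
    | linarith
    | (intro h1 h2; linarith)
    | (intro h1; linarith)

-- L4: unique coefficients in a sector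
lemma coeff_unique (c : Fin 6) (α β α' β' : ℝ)
    (h : α • dir c + β • dir (c+1) = α' • dir c + β' • dir (c+1)) : α = α' ∧ β = β' := by
  fin_cases c <;>
    simp_all [dir, Fin.add_def, Prod.ext_iff, Prod.smul_mk, smul_eq_mul] <;>
    first
    | (obtain ⟨h1, h2⟩ := h; constructor <;> linarith)
    | linarith

end SectorPlanar

namespace SectorPlanar

lemma dir_ne_zero (c : Fin 6) : dir c ≠ 0 := by
  fin_cases c <;> simp [dir, Prod.ext_iff] <;> norm_num

variable {V : Type*} {H : SimpleGraph V} {cls : V → Fin 6} {rad : V → ℝ}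

/-- Master lemma: a graph whose vertices sit on six rays at positive radii, whose edges
join consecutive rays, and whose (tail,head) radius pairs within each sector are pairwise
comparable, is planar (straight-line drawing). -/
theorem isPlanar
    (hrad : ∀ v, 0 < rad v)
    (hinj : ∀ u v, cls u = cls v → rad u = rad v → u = v)
    (horient : ∀ u v, H.Adj u v → cls v = cls u + 1 ∨ cls u = cls v + 1)
    (hcomp : ∀ u v u' v', H.Adj u v → H.Adj u' v' →
      cls v = cls u + 1 → cls v' = cls u' + 1 → cls u = cls u' →
      ((rad u ≤ rad u' ∧ rad v ≤ rad v') ∨ (rad u' ≤ rad u ∧ rad v' ≤ rad v))) :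
    H.IsPlanar := by
  classical
  have succ_ne : ∀ c : Fin 6, c + 1 ≠ c := by decide
  set pos : V → ℝ × ℝ := fun v => rad v • dir (cls v) with hpos
  have posinj : Function.Injective pos := by
    intro u v h
    by_cases hc : cls u = cls v
    · refine hinj u v hc ?_
      simp only [hpos, hc] at h
      have h0 : (rad u - rad v) • dir (cls v) = 0 := by
        rw [sub_smul, h, sub_self]
      rcases smul_eq_zero.1 h0 with h1 | h1
      · linarith
      · exact absurd h1 (dir_ne_zero _)
    · exact absurd h (rays_distinct _ _ hc _ _ (hrad u) (hrad v))
  have hexist : ∀ e : H.edgeSet, ∃ q : V × V,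
      (e : Sym2 V) = s(q.1, q.2) ∧ H.Adj q.1 q.2 ∧ cls q.2 = cls q.1 + 1 := by
    rintro ⟨e, he⟩
    induction e with
    | _ u v =>
      rw [SimpleGraph.mem_edgeSet] at he
      rcases horient u v he with h1 | h1
      · exact ⟨(u, v), rfl, he, h1⟩
      · exact ⟨(v, u), Sym2.eq_swap, he.symm, h1⟩
  set F : H.edgeSet → V × V := fun e => (hexist e).choose with hF
  have hFs : ∀ e : H.edgeSet, (e : Sym2 V) = s((F e).1, (F e).2) := fun e => (hexist e).choose_spec.1
  have hFa : ∀ e : H.edgeSet, H.Adj (F e).1 (F e).2 := fun e => (hexist e).choose_spec.2.1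
  have hFc : ∀ e : H.edgeSet, cls (F e).2 = cls (F e).1 + 1 := fun e => (hexist e).choose_spec.2.2
  set arc : H.edgeSet → ℝ → ℝ × ℝ :=
    fun e t => (1 - t) • pos (F e).1 + t • pos (F e).2 with harc
  have key : ∀ e : H.edgeSet, ∀ t : ℝ, t ∈ Set.Ioo (0:ℝ) 1 →
      arc e t = ((1 - t) * rad (F e).1) • dir (cls (F e).1)
        + (t * rad (F e).2) • dir (cls (F e).1 + 1) := by
    intro e t _
    simp only [harc, hpos, smul_smul, hFc e]
  refine ⟨pos, arc, posinj, ?_, ?_, ?_⟩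
  · intro e
    refine ⟨?_, ?_, (F e).1, (F e).2, hFs e, by simp [harc], by simp [harc]⟩
    · apply Continuous.continuousOn
      exact ((continuous_const.sub continuous_id).smul continuous_const).add
        (continuous_id.smul continuous_const)
    · have hne : pos (F e).1 ≠ pos (F e).2 := fun h => (hFa e).ne (posinj h)
      intro a _ b _ hab
      simp only [harc] at hab
      have : (a - b) • (pos (F e).2 - pos (F e).1) = 0 := by
        rw [smul_sub, sub_smul, sub_smul]
        rw [sub_smul, sub_smul] at hab
        abel_nf
        abel_nf at hab
        linear_combination (norm := module) hab
      rcases smul_eq_zero.1 this with h1 | h1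
      · linarith [sub_eq_zero.1 h1]
      · exact absurd (sub_eq_zero.1 h1).symm hne
  · intro e x hx w
    rw [key e x hx]
    exact ray_not_in_sector _ _ _ _ _
      (mul_pos (by linarith [hx.2]) (hrad _)) (mul_pos hx.1 (hrad _)) (hrad w)
  · intro e f hef x hx y hy
    rw [key e x hx, key f y hy]
    set u := (F e).1; set v := (F e).2; set u' := (F f).1; set v' := (F f).2
    by_cases hc : cls u = cls u'
    · rw [hc]
      intro hcontra
      obtain ⟨h1, h2⟩ := coeff_unique _ _ _ _ _ hcontra
      have hsne : s(u, v) ≠ s(u', v') := by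
        intro h
        exact hef (Subtype.ext (by rw [hFs e, hFs f, h]))
      have hxeq : x = y := by
        rcases hcomp u v u' v' (hFa e) (hFa f) (hFc e) (hFc f) hc with ⟨ha, hb⟩ | ⟨ha, hb⟩
        · have e1 : (1 - x) * rad u ≤ (1 - x) * rad u' :=
            mul_le_mul_of_nonneg_left ha (by linarith [hx.2])
          have e2 : x * rad v ≤ x * rad v' := mul_le_mul_of_nonneg_left hb (le_of_lt hx.1)
          have e3 : (1 - y) * rad u' ≤ (1 - x) * rad u' := by linarith
          have e4 : x ≤ y := by nlinarith [hrad u']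
          have e5 : y * rad v' ≤ x * rad v' := by linarith
          have e6 : y ≤ x := by nlinarith [hrad v']
          exact le_antisymm e4 e6
        · have e1 : (1 - y) * rad u' ≤ (1 - y) * rad u :=
            mul_le_mul_of_nonneg_left ha (by linarith [hy.2])
          have e2 : y * rad v' ≤ y * rad v := mul_le_mul_of_nonneg_left hb (le_of_lt hy.1)
          have e3 : (1 - x) * rad u ≤ (1 - y) * rad u := by linarith
          have e4 : y ≤ x := by nlinarith [hrad u]
          have e5 : x * rad v ≤ y * rad v := by linarith
          have e6 : x ≤ y := by nlinarith [hrad v]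
          exact le_antisymm e6 e4
      subst hxeq
      have hru : rad u = rad u' := mul_left_cancel₀ (show (1:ℝ) - x ≠ 0 by linarith [hx.2]) h1
      have hrv : rad v = rad v' := mul_left_cancel₀ (ne_of_gt hx.1) h2
      have huu : u = u' := hinj _ _ hc hru
      have hvv : v = v' := hinj _ _ (by rw [hFc e, hFc f, hc]) hrv
      exact hsne (by rw [huu, hvv])
    · exact sectors_disjoint _ _ hc _ _ _ _
        (mul_pos (by linarith [hx.2]) (hrad _)) (mul_pos hx.1 (hrad _))
        (mul_pos (by linarith [hy.2]) (hrad _)) (mul_pos hy.1 (hrad _))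

end SectorPlanar


section Constr

variable (p : ℕ)

local notation "nn" => 4*p+3

abbrev VT := (Σ i : Fin 3, Fin (![nn, nn, nn] i)) × Fin 2

instance : NeZero (4*p+3) := ⟨by omega⟩

/-- class table -/
def tcls : Fin 3 → Fin 2 → Fin 6
  | ⟨0,_⟩, ⟨0,_⟩ => 0 | ⟨0,_⟩, ⟨1,_⟩ => 3
  | ⟨1,_⟩, ⟨0,_⟩ => 4 | ⟨1,_⟩, ⟨1,_⟩ => 1
  | ⟨2,_⟩, ⟨0,_⟩ => 2 | ⟨2,_⟩, ⟨1,_⟩ => 5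

def cls (v : VT p) : Fin 6 := tcls v.1.1 v.2
def idxN (v : VT p) : ℕ := v.1.2.val
def idx (v : VT p) : ZMod nn := (idxN p v : ZMod nn)

lemma matrix_n (i : Fin 3) : ![nn, nn, nn] i = nn := by fin_cases i <;> rfl

lemma idxN_lt (v : VT p) : idxN p v < nn := by
  obtain ⟨⟨i, a⟩, b⟩ := v
  revert a; fin_cases i <;> (intro a; exact a.isLt)

lemma idx_val (v : VT p) : (idx p v).val = idxN p v :=
  ZMod.val_cast_of_lt (idxN_lt p v)

lemma idx_inj (u v : VT p) (h : idx p u = idx p v) : idxN p u = idxN p v := by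
  have := congrArg ZMod.val h
  rwa [idx_val, idx_val] at this

lemma tcls_succ : ∀ (i j : Fin 3) (b b' : Fin 2), i ≠ j → b ≠ b' →
    (tcls j b' = tcls i b + 1 ∨ tcls i b = tcls j b' + 1) := by decide

lemma tcls_inj : ∀ (i j : Fin 3) (b b' : Fin 2), tcls i b = tcls j b' → i = j ∧ b = b' := by
  decide

lemma succ_succ_ne (c : Fin 6) : c + 1 + 1 ≠ c := by revert c; decide

lemma parity_succ (c : Fin 6) : (c + 1).val % 2 = (c.val + 1) % 2 := by revert c; decide

lemma vert_ext (u v : VT p) (hc : cls p u = cls p v) (hi : idxN p u = idxN p v) : u = v := by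
  obtain ⟨⟨i, a⟩, b⟩ := u
  obtain ⟨⟨j, a'⟩, b'⟩ := v
  obtain ⟨hij, hbb⟩ := tcls_inj i j b b' hc
  subst hij; subst hbb
  simp only [idxN] at hi
  have : a = a' := Fin.ext hi
  subst this
  rfl

/-- ambient graph adjacency -/
lemma GG_adj (G : SimpleGraph (VT p))
    (hG : G = (completeTripartiteGraph nn nn nn).tensorProd (⊤ : SimpleGraph (Fin 2)))
    (u v : VT p) : G.Adj u v ↔ u.1.1 ≠ v.1.1 ∧ u.2 ≠ v.2 := by
  subst hG; rfl

def GG : SimpleGraph (VT p) :=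
  (completeTripartiteGraph nn nn nn).tensorProd (⊤ : SimpleGraph (Fin 2))

lemma GG_adj' (u v : VT p) : (GG p).Adj u v ↔ u.1.1 ≠ v.1.1 ∧ u.2 ≠ v.2 := Iff.rfl

/- ZMod helpers -/
lemma zmod_cast_top : ((4*p+2 : ℕ) : ZMod nn) = -1 := by
  have h := ZMod.natCast_self (4*p+3)
  push_cast at h ⊢
  linear_combination h

lemma val_succ (x : ZMod nn) (h : x ≠ -1) : (x+1).val = x.val + 1 := by
  have hlt : x.val < 4*p+3 := ZMod.val_lt x
  have hne : x.val ≠ 4*p+2 := by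
    intro hv
    apply h
    have : x = ((x.val : ℕ) : ZMod nn) := by rw [ZMod.natCast_val, ZMod.cast_id]
    rw [this, hv, zmod_cast_top]
  have hx : x + 1 = (((x.val + 1 : ℕ)) : ZMod nn) := by
    push_cast [ZMod.natCast_val, ZMod.cast_id]
    ring
  rw [hx, ZMod.val_cast_of_lt (by omega)]

lemma val_pred (x : ZMod nn) (h : x ≠ 0) : (x-1).val + 1 = x.val := by
  have hpos : 0 < x.val := by
    rcases Nat.eq_zero_or_pos x.val with h0 | h0
    · exact absurd ((ZMod.val_eq_zero x).1 h0) h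
    · exact h0
  have hx : x - 1 = (((x.val - 1 : ℕ)) : ZMod nn) := by
    rw [Nat.cast_sub hpos, ZMod.natCast_val, ZMod.cast_id]
    norm_num
  rw [hx, ZMod.val_cast_of_lt (by have := ZMod.val_lt x; omega)]
  omega

/- shift machinery -/
def sgn (c : Fin 6) : ZMod nn := if c.val % 2 = 0 then 1 else -1

def sh (u v : VT p) : ZMod nn := sgn p (cls p u) * (idx p v - idx p u)

def dd (t : ℕ) : ZMod nn := ((2*p+1-t : ℕ) : ZMod nn)

def delt (t : ℕ) (c : Fin 6) : ZMod nn :=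
  if c.val % 2 = 0 then dd p t else dd p t + ((2*t+1 : ℕ) : ZMod nn)

def missv (t : ℕ) (c : Fin 6) : ZMod nn :=
  if c.val % 2 = 0 then ((2*p-t : ℕ) : ZMod nn) else ((2*p+t+2 : ℕ) : ZMod nn)

def OA (t : ℕ) (u v : VT p) : Prop :=
  cls p v = cls p u + 1 ∧
    (sh p u v = ((2*t+1 : ℕ) : ZMod nn) ∨
     (sh p u v = ((2*t+2 : ℕ) : ZMod nn) ∧ idx p u ≠ missv p t (cls p u)))

def OL (u v : VT p) : Prop :=
  cls p v = cls p u + 1 ∧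
    (sh p u v = 0 ∨ ∃ t : ℕ, t < 2*p+1 ∧ sh p u v = ((2*t+2 : ℕ) : ZMod nn) ∧
      idx p u = missv p t (cls p u))

def annulus (t : ℕ) : SimpleGraph (VT p) where
  Adj u v := (GG p).Adj u v ∧ (OA p t u v ∨ OA p t v u)
  symm := ⟨by rintro u v ⟨h1, h2⟩; exact ⟨h1.symm, h2.symm⟩⟩
  loopless := ⟨fun v h => (GG p).loopless.irrefl v h.1⟩

def lastP : SimpleGraph (VT p) where
  Adj u v := (GG p).Adj u v ∧ (OL p u v ∨ OL p v u)
  symm := ⟨by rintro u v ⟨h1, h2⟩; exact ⟨h1.symm, h2.symm⟩⟩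
  loopless := ⟨fun v h => (GG p).loopless.irrefl v h.1⟩

lemma cover_oriented (u v : VT p) (hc : cls p v = cls p u + 1) :
    (∃ t, t < 2*p+1 ∧ OA p t u v) ∨ OL p u v := by
  have hval : sh p u v = (((sh p u v).val : ℕ) : ZMod nn) := by
    rw [ZMod.natCast_val, ZMod.cast_id]
  rcases Nat.eq_zero_or_pos (sh p u v).val with h0 | hpos
  · right
    exact ⟨hc, Or.inl (by rw [hval, h0, Nat.cast_zero])⟩
  · have hlt : (sh p u v).val < 4*p+3 := ZMod.val_lt _
    rcases Nat.even_or_odd (sh p u v).val with ⟨t, ht⟩ | ⟨t, ht⟩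
    · have h2 : (sh p u v).val = 2*(t-1)+2 := by omega
      have ht' : t - 1 < 2*p+1 := by omega
      by_cases hm : idx p u = missv p (t-1) (cls p u)
      · right; exact ⟨hc, Or.inr ⟨t-1, ht', by rw [hval, h2], hm⟩⟩
      · left; exact ⟨t-1, ht', hc, Or.inr ⟨by rw [hval, h2], hm⟩⟩
    · have ht' : t < 2*p+1 := by omega
      left; exact ⟨t, ht', hc, Or.inl (by rw [hval, ht])⟩

lemma cover (u v : VT p) (h : (GG p).Adj u v) :
    (∃ t, t < 2*p+1 ∧ (annulus p t).Adj u v) ∨ (lastP p).Adj u v := by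
  have hne : u.1.1 ≠ v.1.1 ∧ u.2 ≠ v.2 := (GG_adj' p u v).1 h
  rcases tcls_succ u.1.1 v.1.1 u.2 v.2 hne.1 hne.2 with h1 | h1
  · rcases cover_oriented p u v h1 with ⟨t, ht, hOA⟩ | hOL
    · exact Or.inl ⟨t, ht, h, Or.inl hOA⟩
    · exact Or.inr ⟨h, Or.inl hOL⟩
  · rcases cover_oriented p v u h1 with ⟨t, ht, hOA⟩ | hOL
    · exact Or.inl ⟨t, ht, h, Or.inr hOA⟩
    · exact Or.inr ⟨h, Or.inr hOL⟩

/- radii -/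
def radAN (t : ℕ) (v : VT p) : ℕ := (idx p v - delt p t (cls p v)).val + 1

def radLN (v : VT p) : ℕ :=
  if (idx p v).val ≤ 2*p then 4*p+2 - 2*(idx p v).val
  else if (idx p v).val = 2*p+1 then 1 else 2*(idx p v).val - (4*p+1)

lemma zmod_val_inj (x y : ZMod nn) (h : x.val = y.val) : x = y := by
  have hx : x = ((x.val : ℕ) : ZMod nn) := by rw [ZMod.natCast_val, ZMod.cast_id]
  have hy : y = ((y.val : ℕ) : ZMod nn) := by rw [ZMod.natCast_val, ZMod.cast_id]
  rw [hx, hy, h]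

lemma radA_inj (t : ℕ) (u v : VT p) (hc : cls p u = cls p v)
    (hr : radAN p t u = radAN p t v) : u = v := by
  have h1 : (idx p u - delt p t (cls p u)).val = (idx p v - delt p t (cls p v)).val := by
    simpa [radAN] using hr
  rw [hc] at h1
  have h2 := zmod_val_inj p _ _ h1
  have h3 : idx p u = idx p v := by
    have := sub_left_inj.1 h2
    exact this
  exact vert_ext p u v hc (idx_inj p u v h3)

lemma radL_inj (u v : VT p) (hc : cls p u = cls p v)
    (hr : radLN p u = radLN p v) : u = v := by
  have hu := ZMod.val_lt (idx p u)
  have hv := ZMod.val_lt (idx p v)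
  have h1 : (idx p u).val = (idx p v).val := by
    simp only [radLN] at hr
    split_ifs at hr <;> omega
  exact vert_ext p u v hc (idx_inj p u v (zmod_val_inj p _ _ h1))

/- parity housekeeping -/
lemma parity_cases (c : Fin 6) : c.val % 2 = 0 ∨ c.val % 2 = 1 := Nat.mod_two_eq_zero_or_one _

lemma delt_even (t : ℕ) (c : Fin 6) (h : c.val % 2 = 0) : delt p t c = dd p t := if_pos h
lemma delt_odd (t : ℕ) (c : Fin 6) (h : c.val % 2 = 1) :
    delt p t c = dd p t + ((2*t+1 : ℕ) : ZMod nn) := by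
  rw [delt, if_neg (by omega)]
lemma sgn_even (c : Fin 6) (h : c.val % 2 = 0) : sgn p c = 1 := if_pos h
lemma sgn_odd (c : Fin 6) (h : c.val % 2 = 1) : sgn p c = -1 := by
  rw [sgn, if_neg (by omega)]
lemma succ_par_even (c : Fin 6) (h : c.val % 2 = 0) : (c+1).val % 2 = 1 := by
  rw [parity_succ]; omega
lemma succ_par_odd (c : Fin 6) (h : c.val % 2 = 1) : (c+1).val % 2 = 0 := by
  rw [parity_succ]; omega

lemma dd_succ (t : ℕ) (ht : t < 2*p+1) : dd p t = ((2*p-t : ℕ) : ZMod nn) + 1 := by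
  rw [dd]
  have h : 2*p+1-t = (2*p-t)+1 := by omega
  rw [h]
  push_cast
  ring

lemma miss_odd_delt (t : ℕ) (ht : t < 2*p+1) (c : Fin 6) (h : c.val % 2 = 1) :
    missv p t c = delt p t c := by
  rw [missv, if_neg (by omega), delt_odd p t c h, dd]
  have h2 : (2*p+t+2 : ℕ) = (2*p+1-t) + (2*t+1) := by omega
  rw [h2]
  push_cast
  ring

/-- Shape of an oriented annulus edge. -/
lemma shape_A (t : ℕ) (ht : t < 2*p+1) (u v : VT p) (hO : OA p t u v) :
    ((cls p u).val % 2 = 0 ∧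
      (radAN p t v = radAN p t u ∨ radAN p t v = radAN p t u + 1)) ∨
    ((cls p u).val % 2 = 1 ∧
      (radAN p t v = radAN p t u ∨ radAN p t v + 1 = radAN p t u)) := by
  obtain ⟨hc, hcase⟩ := hO
  rcases parity_cases (cls p u) with hpar | hpar
  · left
    refine ⟨hpar, ?_⟩
    have hsgn := sgn_even p _ hpar
    have hdeltu := delt_even p t _ hpar
    have hdeltv : delt p t (cls p v) = dd p t + ((2*t+1 : ℕ) : ZMod nn) := by
      rw [hc]; exact delt_odd p t _ (succ_par_even _ hpar)
    rcases hcase with hsh | ⟨hsh, hmiss⟩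
    · left
      rw [sh, hsgn, one_mul] at hsh
      have hv : idx p v - delt p t (cls p v) = idx p u - delt p t (cls p u) := by
        rw [hdeltu, hdeltv]
        push_cast at hsh ⊢
        linear_combination hsh
      rw [radAN, radAN, hv]
    · right
      rw [sh, hsgn, one_mul] at hsh
      have hne1 : idx p u - delt p t (cls p u) ≠ -1 := by
        rw [hdeltu]
        intro hx
        apply hmiss
        rw [missv, if_pos hpar]
        have := dd_succ p t ht
        linear_combination hx + this
      have hv : idx p v - delt p t (cls p v) = (idx p u - delt p t (cls p u)) + 1 := by
        rw [hdeltu, hdeltv]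
        push_cast at hsh ⊢
        linear_combination hsh
      rw [radAN, radAN, hv, val_succ p _ hne1]
  · right
    refine ⟨hpar, ?_⟩
    have hsgn := sgn_odd p _ hpar
    have hdeltu := delt_odd p t _ hpar
    have hdeltv : delt p t (cls p v) = dd p t := by
      rw [hc]; exact delt_even p t _ (succ_par_odd _ hpar)
    rcases hcase with hsh | ⟨hsh, hmiss⟩
    · left
      rw [sh, hsgn] at hsh
      have hv : idx p v - delt p t (cls p v) = idx p u - delt p t (cls p u) := by
        rw [hdeltu, hdeltv]
        push_cast at hsh ⊢
        linear_combination -hsh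
      rw [radAN, radAN, hv]
    · right
      rw [sh, hsgn] at hsh
      have hne0 : idx p u - delt p t (cls p u) ≠ 0 := by
        intro hx
        apply hmiss
        rw [miss_odd_delt p t ht _ hpar]
        linear_combination hx
      have hv : idx p v - delt p t (cls p v) = (idx p u - delt p t (cls p u)) - 1 := by
        rw [hdeltu, hdeltv]
        push_cast at hsh ⊢
        linear_combination -hsh
      rw [radAN, radAN, hv]
      have := val_pred p _ hne0
      omega

/-- Shape of an oriented last-part edge. -/
lemma shape_L (u v : VT p) (hO : OL p u v) :
    ((cls p u).val % 2 = 0 ∧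
      (radLN p v = radLN p u ∨ radLN p v = radLN p u + 1)) ∨
    ((cls p u).val % 2 = 1 ∧
      (radLN p v = radLN p u ∨ radLN p v + 1 = radLN p u)) := by
  obtain ⟨hc, hcase⟩ := hO
  have heq0 : sh p u v = 0 → idx p v = idx p u := by
    intro hsh
    rcases parity_cases (cls p u) with hpar | hpar
    · rw [sh, sgn_even p _ hpar, one_mul] at hsh
      linear_combination hsh
    · rw [sh, sgn_odd p _ hpar] at hsh
      linear_combination -hsh
  rcases hcase with hsh | ⟨t, ht, hsh, hmiss⟩
  · have hv : radLN p v = radLN p u := by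
      rw [radLN, radLN, heq0 hsh]
    rcases parity_cases (cls p u) with hpar | hpar
    · exact Or.inl ⟨hpar, Or.inl hv⟩
    · exact Or.inr ⟨hpar, Or.inl hv⟩
  · have hv1 : ((2*p-t : ℕ) : ZMod nn).val = 2*p-t := ZMod.val_cast_of_lt (by omega)
    have hv2 : ((2*p+t+2 : ℕ) : ZMod nn).val = 2*p+t+2 := ZMod.val_cast_of_lt (by omega)
    rcases parity_cases (cls p u) with hpar | hpar
    · left
      refine ⟨hpar, Or.inr ?_⟩
      rw [missv, if_pos hpar] at hmiss
      rw [sh, sgn_even p _ hpar, one_mul] at hsh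
      have hiv : idx p v = ((2*p+t+2 : ℕ) : ZMod nn) := by
        have hcast : ((2*p+t+2 : ℕ) : ZMod nn) = ((2*p-t : ℕ) : ZMod nn) + ((2*t+2 : ℕ) : ZMod nn) := by
          have : (2*p+t+2 : ℕ) = (2*p-t) + (2*t+2) := by omega
          rw [this]; push_cast; ring
        rw [hcast, ← hmiss]
        linear_combination hsh
      have hru : radLN p u = 2*t+2 := by
        rw [radLN, hmiss, hv1, if_pos (by omega)]
        omega
      have hrv : radLN p v = 2*t+3 := by
        rw [radLN, hiv, hv2, if_neg (by omega), if_neg (by omega)]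
        omega
      omega
    · right
      refine ⟨hpar, Or.inr ?_⟩
      rw [missv, if_neg (by omega)] at hmiss
      rw [sh, sgn_odd p _ hpar] at hsh
      have hiv : idx p v = ((2*p-t : ℕ) : ZMod nn) := by
        have hcast : ((2*p+t+2 : ℕ) : ZMod nn) = ((2*p-t : ℕ) : ZMod nn) + ((2*t+2 : ℕ) : ZMod nn) := by
          have : (2*p+t+2 : ℕ) = (2*p-t) + (2*t+2) := by omega
          rw [this]; push_cast; ring
        have := hmiss
        rw [hcast] at this
        linear_combination this - hsh
      have hru : radLN p u = 2*t+3 := by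
        rw [radLN, hmiss, hv2, if_neg (by omega), if_neg (by omega)]
        omega
      have hrv : radLN p v = 2*t+2 := by
        rw [radLN, hiv, hv1, if_pos (by omega)]
        omega
      omega

lemma annulus_planar (t : ℕ) (ht : t < 2*p+1) : (annulus p t).IsPlanar := by
  apply SectorPlanar.isPlanar (cls := cls p) (rad := fun v => (radAN p t v : ℝ))
  · intro v
    have : 0 < radAN p t v := Nat.succ_pos _
    exact_mod_cast this
  · intro u v hcl hr
    exact radA_inj p t u v hcl (by exact_mod_cast hr)
  · rintro u v ⟨hadj, hO | hO⟩
    · exact Or.inl hO.1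
    · exact Or.inr hO.1
  · rintro u v u' v' ⟨hadj, hO⟩ ⟨hadj', hO'⟩ hcv hcv' hcc
    have hOuv : OA p t u v := by
      rcases hO with h | h
      · exact h
      · exact absurd (by rw [← hcv]; exact h.1.symm) (succ_succ_ne (cls p u))
    have hOuv' : OA p t u' v' := by
      rcases hO' with h | h
      · exact h
      · exact absurd (by rw [← hcv']; exact h.1.symm) (succ_succ_ne (cls p u'))
    have hs1 := shape_A p t ht u v hOuv
    have hs2 := shape_A p t ht u' v' hOuv'
    have goal_nat : (radAN p t u ≤ radAN p t u' ∧ radAN p t v ≤ radAN p t v') ∨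
        (radAN p t u' ≤ radAN p t u ∧ radAN p t v' ≤ radAN p t v) := by
      rw [hcc] at hs1
      rcases hs1 with ⟨hp1, hq1⟩ | ⟨hp1, hq1⟩ <;> rcases hs2 with ⟨hp2, hq2⟩ | ⟨hp2, hq2⟩ <;> omega
    rcases goal_nat with ⟨h1, h2⟩ | ⟨h1, h2⟩
    · exact Or.inl ⟨by exact_mod_cast h1, by exact_mod_cast h2⟩
    · exact Or.inr ⟨by exact_mod_cast h1, by exact_mod_cast h2⟩

lemma last_planar : (lastP p).IsPlanar := by
  apply SectorPlanar.isPlanar (cls := cls p) (rad := fun v => (radLN p v : ℝ))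
  · intro v
    have hu := ZMod.val_lt (idx p v)
    have : 0 < radLN p v := by
      rw [radLN]; split_ifs <;> omega
    exact_mod_cast this
  · intro u v hcl hr
    exact radL_inj p u v hcl (by exact_mod_cast hr)
  · rintro u v ⟨hadj, hO | hO⟩
    · exact Or.inl hO.1
    · exact Or.inr hO.1
  · rintro u v u' v' ⟨hadj, hO⟩ ⟨hadj', hO'⟩ hcv hcv' hcc
    have hOuv : OL p u v := by
      rcases hO with h | h
      · exact h
      · exact absurd (by rw [← hcv]; exact h.1.symm) (succ_succ_ne (cls p u))
    have hOuv' : OL p u' v' := by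
      rcases hO' with h | h
      · exact h
      · exact absurd (by rw [← hcv']; exact h.1.symm) (succ_succ_ne (cls p u'))
    have hs1 := shape_L p u v hOuv
    have hs2 := shape_L p u' v' hOuv'
    have goal_nat : (radLN p u ≤ radLN p u' ∧ radLN p v ≤ radLN p v') ∨
        (radLN p u' ≤ radLN p u ∧ radLN p v' ≤ radLN p v) := by
      rw [hcc] at hs1
      rcases hs1 with ⟨hp1, hq1⟩ | ⟨hp1, hq1⟩ <;> rcases hs2 with ⟨hp2, hq2⟩ | ⟨hp2, hq2⟩ <;> omega
    rcases goal_nat with ⟨h1, h2⟩ | ⟨h1, h2⟩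
    · exact Or.inl ⟨by exact_mod_cast h1, by exact_mod_cast h2⟩
    · exact Or.inr ⟨by exact_mod_cast h1, by exact_mod_cast h2⟩

def partsF : Fin (2*p+2) → SimpleGraph (VT p) :=
  fun i => if (i : ℕ) < 2*p+1 then annulus p i else lastP p

lemma partsF_le (i : Fin (2*p+2)) :
    partsF p i ≤ (completeTripartiteGraph nn nn nn).tensorProd (⊤ : SimpleGraph (Fin 2)) := by
  intro u v h
  unfold partsF at h
  split_ifs at h
  exacts [h.1, h.1]

lemma partsF_planar (i : Fin (2*p+2)) : (partsF p i).IsPlanar := by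
  unfold partsF
  split_ifs with h
  · exact annulus_planar p i h
  · exact last_planar p

lemma partsF_sup :
    (⨆ i, partsF p i) = (completeTripartiteGraph nn nn nn).tensorProd (⊤ : SimpleGraph (Fin 2)) := by
  ext u v
  rw [SimpleGraph.iSup_adj]
  constructor
  · rintro ⟨i, hi⟩
    exact partsF_le p i hi
  · intro h
    rcases cover p u v h with ⟨t, ht, hA⟩ | hL
    · refine ⟨⟨t, by omega⟩, ?_⟩
      show (if (t : ℕ) < 2*p+1 then annulus p t else lastP p).Adj u v
      rw [if_pos ht]
      exact hA
    · refine ⟨⟨2*p+1, by omega⟩, ?_⟩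
      show (if (2*p+1 : ℕ) < 2*p+1 then annulus p (2*p+1) else lastP p).Adj u v
      rw [if_neg (by omega)]
      exact hL

end Constr

/-- For `p ≥ 0` and `n = 4p + 3`, `K_{n,n,n} × K₂` has a planar decomposition
into `2p + 2` planar subgraphs; in particular `θ(K_{4p+3,4p+3,4p+3} × K₂) ≤ 2p + 2`. -/
theorem completeTripartite_tensorProd_K2_decomposition_of_4p3 (p : ℕ) :
    ((completeTripartiteGraph (4 * p + 3) (4 * p + 3) (4 * p + 3)).tensorProd
        (⊤ : SimpleGraph (Fin 2))).HasPlanarDecomposition (2 * p + 2) ∧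
    ((completeTripartiteGraph (4 * p + 3) (4 * p + 3) (4 * p + 3)).tensorProd
        (⊤ : SimpleGraph (Fin 2))).thickness ≤ 2 * p + 2 := by
  constructor
  · exact ⟨partsF p, partsF_le p, partsF_planar p, partsF_sup p⟩
  · exact Nat.sInf_le ⟨partsF p, partsF_le p, partsF_planar p, partsF_sup p⟩
end
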